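/- Let L > 0 and let (τ_k)_{k≥1} be a sequence of real numbers with τ_k ≥ 1/L for all k ≥ 1. Let (η_k)_{k≥0} be a sequence of positive reals with η_0 ≥ 1/L satisfying, for every k ≥ 1: η_k = (1 + 1/τ_k)η_{k−1} if τ_k ≥ η_{k−1}; η_k = τ_k if η_{k−1}/2 < τ_k < η_{k−1}; and η_k = η_{k−1}/√2 if τ_k ≤ η_{k−1}/2. Then η_k ≥ 1/(2L) for every k ≥ 0. -/
import Mathlib


/-- Lemma 3.18 of the paper (deterministic version): the adaptive step-size recursion of
PSGA, initialized with `η_0 ≥ 1/L` and driven by BB quantities `τ_k ≥ 1/L`, keeps all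
step sizes bounded below by `1/(2L)`. -/
theorem stepsize_lower_bound
    (L : ℝ) (hL : 0 < L) (τ η : ℕ → ℝ)
    (hτ : ∀ k, 1 ≤ k → 1 / L ≤ τ k)
    (hη_pos : ∀ k, 0 < η k)
    (hη0 : 1 / L ≤ η 0)
    (hrec1 : ∀ k, 1 ≤ k → η (k - 1) ≤ τ k → η k = (1 + 1 / τ k) * η (k - 1))
    (hrec2 : ∀ k, 1 ≤ k → η (k - 1) / 2 < τ k → τ k < η (k - 1) → η k = τ k)
    (hrec3 : ∀ k, 1 ≤ k → τ k ≤ η (k - 1) / 2 → η k = η (k - 1) / Real.sqrt 2) :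
    ∀ k, 1 / (2 * L) ≤ η k := by
  have hhalf : 1 / (2 * L) ≤ 1 / L := by
    apply one_div_le_one_div_of_le hL; linarith
  intro k
  induction k with
  | zero => linarith
  | succ n ih =>
      have h1 : 1 ≤ n + 1 := Nat.le_add_left 1 n
      have hsub : (n + 1) - 1 = n := rfl
      have hτpos : 0 < τ (n + 1) := lt_of_lt_of_le (by positivity) (hτ (n + 1) h1)
      rcases le_or_gt (η n) (τ (n + 1)) with hc | hc
      · have := hrec1 (n + 1) h1 (by rw [hsub]; exact hc)
        rw [this, hsub]
        have hηpos := hη_pos n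
        have : η n ≤ (1 + 1 / τ (n + 1)) * η n := by
          nlinarith [one_div_pos.mpr hτpos]
        linarith
      · rcases lt_or_ge (η n / 2) (τ (n + 1)) with hc2 | hc2
        · have := hrec2 (n + 1) h1 (by rw [hsub]; exact hc2) (by rw [hsub]; exact hc)
          rw [this]
          exact le_trans hhalf (hτ (n + 1) h1)
        · have heq := hrec3 (n + 1) h1 (by rw [hsub]; exact hc2)
          rw [heq, hsub]
          have hτL := hτ (n + 1) h1
          have hηge : 2 * (1 / L) ≤ η n := by
            have : 1 / L ≤ η n / 2 := le_trans hτL hc2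
            linarith
          have hs2 : Real.sqrt 2 ≤ 2 := by
            nlinarith [Real.sq_sqrt (by norm_num : (0:ℝ) ≤ 2), Real.sqrt_nonneg 2]
          have hs2pos : (0:ℝ) < Real.sqrt 2 := Real.sqrt_pos.mpr (by norm_num)
          have h1L : (0:ℝ) ≤ 1 / L := by positivity
          have : 1 / L ≤ η n / Real.sqrt 2 := by
            rw [le_div_iff₀ hs2pos]
            nlinarith
          linarith
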